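/- (One-step combinatorial interpolation.) For all positive integers e, n, N there exists a positive integer d with the following property: for every finite set X with |X| ≥ d and every coloring t of the nonempty subsets of X of size at most n−1 by N colors, there exists a subset H ⊆ X with |H| = e·(n−1)! (in particular H is nonempty) such that for every color a and every 1 ≤ s ≤ n−1: #{S ⊆ X : |S| = s and t(S) = a} ≡ #{S ⊆ X \ H : |S| = s and t(S) = a} (mod e). -/

import Mathlib

open Finset

def RamseyStmt (κ : Type) [Fintype κ] [DecidableEq κ] (r : ℕ) : Prop :=
  ∀ m : ℕ, ∃ d : ℕ, ∀ (α : Type) [DecidableEq α] (X : Finset α) (c : Finset α → κ),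
    d ≤ X.card → ∃ Y : Finset α, Y ⊆ X ∧ m ≤ Y.card ∧
      ∃ γ : κ, ∀ S : Finset α, S ⊆ Y → S.card = r → c S = γ

theorem chainLemma (κ : Type) [Fintype κ] [DecidableEq κ] (r : ℕ)
    (hR : RamseyStmt κ r) (M : ℕ) :
    ∃ d : ℕ, ∀ (α : Type) [DecidableEq α] (X : Finset α) (c : Finset α → κ),
      d ≤ X.card → ∃ (x : Fin M → α) (γ : Fin M → κ),
        (∀ i, x i ∈ X) ∧ Function.Injective x ∧
        ∀ (i : Fin M) (T : Finset α), T ⊆ (Finset.Ioi i).image x → T.card = r →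
          c (insert (x i) T) = γ i := by
  induction M with
  | zero =>
      exact ⟨0, fun α _ X c _ =>
        ⟨Fin.elim0, Fin.elim0, fun i => i.elim0, fun i => i.elim0, fun i => i.elim0⟩⟩
  | succ M ihM =>
      obtain ⟨dM, hdM⟩ := ihM
      obtain ⟨dR, hdR⟩ := hR dM
      refine ⟨dR + 1, fun α _ X c hX => ?_⟩
      have hne : X.Nonempty := Finset.card_pos.mp (by omega)
      obtain ⟨x0, hx0⟩ := hne
      have hX' : dR ≤ (X.erase x0).card := by
        rw [Finset.card_erase_of_mem hx0]; omega
      obtain ⟨Y, hYX, hYcard, γ0, hγ0⟩ := hdR α (X.erase x0) (fun T => c (insert x0 T)) hX'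
      obtain ⟨x, γ, hmem, hinj, hprop⟩ := hdM α Y c hYcard
      have hxX : ∀ j, x j ∈ X.erase x0 := fun j => hYX (hmem j)
      refine ⟨Fin.cases x0 x, Fin.cases γ0 γ, ?_, ?_, ?_⟩
      · intro i
        induction i using Fin.cases with
        | zero => simpa using hx0
        | succ j => simpa using Finset.mem_of_mem_erase (hxX j)
      · intro i j h
        induction i using Fin.cases with
        | zero =>
            induction j using Fin.cases with
            | zero => rfl
            | succ j' =>
                simp only [Fin.cases_zero, Fin.cases_succ] at h
                exact absurd h.symm (Finset.ne_of_mem_erase (hxX j'))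
        | succ i' =>
            induction j using Fin.cases with
            | zero =>
                simp only [Fin.cases_zero, Fin.cases_succ] at h
                exact absurd h (Finset.ne_of_mem_erase (hxX i'))
            | succ j' =>
                simp only [Fin.cases_succ] at h
                exact congrArg Fin.succ (hinj h)
      · intro i T hT hTcard
        induction i using Fin.cases with
        | zero =>
            simp only [Fin.cases_zero]
            have hTY : T ⊆ Y := by
              intro a ha
              obtain ⟨k, hk, rfl⟩ := Finset.mem_image.mp (hT ha)
              have hk0 : k ≠ 0 := Fin.ne_of_gt (Finset.mem_Ioi.mp hk)
              obtain ⟨k', rfl⟩ := Fin.exists_succ_eq.mpr hk0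
              simpa using hmem k'
            exact hγ0 T hTY hTcard
        | succ j =>
            simp only [Fin.cases_succ]
            refine hprop j T ?_ hTcard
            intro a ha
            obtain ⟨k, hk, rfl⟩ := Finset.mem_image.mp (hT ha)
            have hk' : j.succ < k := Finset.mem_Ioi.mp hk
            have hk0 : k ≠ 0 := Fin.ne_of_gt (lt_trans (Fin.succ_pos j) hk')
            obtain ⟨k', rfl⟩ := Fin.exists_succ_eq.mpr hk0
            simp only [Fin.cases_succ]
            exact Finset.mem_image.mpr ⟨k', Finset.mem_Ioi.mpr (by
              exact_mod_cast Fin.succ_lt_succ_iff.mp hk'), rfl⟩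

theorem myRamsey (κ : Type) [Fintype κ] [DecidableEq κ] (r : ℕ) : RamseyStmt κ r := by
  induction r with
  | zero =>
      intro m
      refine ⟨m, fun α _ X c hX => ⟨X, subset_rfl, hX, c ∅, fun S _ hS => ?_⟩⟩
      rw [Finset.card_eq_zero.mp hS]
  | succ r ih =>
      intro m
      obtain ⟨d, hd⟩ := chainLemma κ r ih (Fintype.card κ * (m - 1) + 1)
      refine ⟨d, fun α _ X c hX => ?_⟩
      obtain ⟨x, γ, hmem, hinj, hprop⟩ := hd α X c hX
      obtain ⟨γ0, hγ0⟩ := Fintype.exists_lt_card_fiber_of_mul_lt_card (f := γ) (n := m - 1)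
        (by simp [Fintype.card_fin])
      set I : Finset (Fin (Fintype.card κ * (m - 1) + 1)) :=
        Finset.univ.filter (fun i => γ i = γ0) with hI
      have hIcard : m ≤ I.card := by omega
      refine ⟨I.image x, ?_, ?_, γ0, ?_⟩
      · intro a ha
        obtain ⟨i, _, rfl⟩ := Finset.mem_image.mp ha
        exact hmem i
      · rwa [Finset.card_image_of_injective _ hinj]
      · intro S hS hScard
        set J := I.filter (fun i => x i ∈ S) with hJ
        have hJS : J.image x = S := by
          apply Finset.Subset.antisymm
          · intro a ha
            obtain ⟨i, hi, rfl⟩ := Finset.mem_image.mp ha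
            exact (Finset.mem_filter.mp hi).2
          · intro a ha
            obtain ⟨i, hi, rfl⟩ := Finset.mem_image.mp (hS ha)
            exact Finset.mem_image.mpr ⟨i, Finset.mem_filter.mpr ⟨hi, ha⟩, rfl⟩
        have hJcard : J.card = r + 1 := by
          rw [← hScard, ← hJS, Finset.card_image_of_injective _ hinj]
        have hJne : J.Nonempty := Finset.card_pos.mp (by omega)
        set i0 := J.min' hJne with hi0
        have hi0J : i0 ∈ J := J.min'_mem hJne
        have hSdecomp : S = insert (x i0) ((J.erase i0).image x) := by
          rw [← hJS, ← Finset.image_insert, Finset.insert_erase hi0J]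
        have hT : (J.erase i0).image x ⊆ (Finset.Ioi i0).image x := by
          apply Finset.image_subset_image
          intro j hj
          have := Finset.mem_erase.mp hj
          exact Finset.mem_Ioi.mpr (lt_of_le_of_ne (J.min'_le j this.2) (Ne.symm this.1))
        have hTcard : ((J.erase i0).image x).card = r := by
          rw [Finset.card_image_of_injective _ hinj, Finset.card_erase_of_mem hi0J, hJcard]
          omega
        rw [hSdecomp, hprop i0 _ hT hTcard]
        exact (Finset.mem_filter.mp (Finset.mem_filter.mp hi0J).1).2

theorem multiRamsey (κ : Type) [Fintype κ] [DecidableEq κ] (r m : ℕ) :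
    ∃ d : ℕ, ∀ (α : Type) [DecidableEq α] (X : Finset α) (c : Finset α → κ),
      d ≤ X.card → ∃ Y : Finset α, Y ⊆ X ∧ m ≤ Y.card ∧
        ∀ j : ℕ, 1 ≤ j → j ≤ r →
          ∃ γ : κ, ∀ S : Finset α, S ⊆ Y → S.card = j → c S = γ := by
  induction r with
  | zero => exact ⟨m, fun α _ X c hX => ⟨X, subset_rfl, hX, fun j h1 h0 => by omega⟩⟩
  | succ r ih =>
      obtain ⟨dr, hdr⟩ := ih
      obtain ⟨d, hd⟩ := myRamsey κ (r + 1) dr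
      refine ⟨d, fun α _ X c hX => ?_⟩
      obtain ⟨Y1, hY1X, hY1card, γ1, hγ1⟩ := hd α X c hX
      obtain ⟨Y, hYY1, hYcard, hhom⟩ := hdr α Y1 c hY1card
      refine ⟨Y, hYY1.trans hY1X, hYcard, fun j h1 hj => ?_⟩
      rcases Nat.lt_succ_iff_lt_or_eq.mp (Nat.lt_succ_of_le hj) with h | rfl
      · exact hhom j h1 (by omega)
      · exact ⟨γ1, fun S hS hScard => hγ1 S (hS.trans hYY1) hScard⟩

theorem choose_dvd_aux (e n j : ℕ) (he : 0 < e) (h1 : 1 ≤ j) (h2 : j ≤ n - 1) :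
    e ∣ Nat.choose (e * Nat.factorial (n - 1)) j := by
  set m := e * Nat.factorial (n - 1) with hm
  have hjm : j ∣ Nat.factorial (n - 1) := Nat.dvd_factorial h1 h2
  obtain ⟨q, hq⟩ := hjm
  have hmpos : 0 < m := Nat.mul_pos he (Nat.factorial_pos _)
  have key : Nat.choose m j * j = m * Nat.choose (m - 1) (j - 1) := by
    have := Nat.add_one_mul_choose_eq (m - 1) (j - 1)
    rw [Nat.sub_add_cancel hmpos,
      Nat.sub_add_cancel h1] at this
    omega
  have : Nat.choose m j * j = e * (q * Nat.choose (m - 1) (j - 1)) * j := by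
    rw [key, hm, hq]; ring
  exact ⟨q * Nat.choose (m - 1) (j - 1), Nat.eq_of_mul_eq_mul_right h1 this⟩

/-- One-step combinatorial interpolation: for all positive `e`, `n`, `N` there
is a positive `d` such that for every finite set `X` with `|X| ≥ d` and every
coloring `t` of the (nonempty, of size `≤ n-1`) subsets of `X` by `N` colors,
there is `H ⊆ X` with `|H| = e·(n-1)!` such that for every color `a` and every
`1 ≤ s ≤ n-1` the number of size-`s` subsets of `X` with color `a` is congruent
mod `e` to the number of size-`s` subsets of `X \ H` with color `a`. -/
theorem one_step_interpolation (e n N : ℕ) (he : 0 < e) (hn : 0 < n) (hN : 0 < N) :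
    ∃ d : ℕ, 0 < d ∧
      ∀ (α : Type) [DecidableEq α] (X : Finset α), d ≤ X.card →
        ∀ t : Finset α → Fin N,
          ∃ H : Finset α, H ⊆ X ∧ H.card = e * Nat.factorial (n - 1) ∧
            ∀ (a : Fin N) (s : ℕ), 1 ≤ s → s ≤ n - 1 →
              (X.powerset.filter fun S => S.card = s ∧ t S = a).card ≡
                ((X \ H).powerset.filter fun S => S.card = s ∧ t S = a).card [MOD e] := by
  haveI : NeZero e := ⟨he.ne'⟩
  obtain ⟨d, hd⟩ := multiRamsey (Fin N → Fin n → ZMod e) (n - 1) (e * Nat.factorial (n - 1))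
  refine ⟨d + 1, Nat.succ_pos _, ?_⟩
  intro α _ X hX t
  set c : Finset α → (Fin N → Fin n → ZMod e) := fun J a s =>
    ((X.powerset.filter fun S => J ⊆ S ∧ S.card = (s : ℕ) ∧ t S = a).card : ZMod e) with hc
  obtain ⟨Y, hYX, hYcard, hhom⟩ := hd α X c (by omega)
  obtain ⟨H, hHY, hHcard⟩ := Finset.exists_subset_card_eq hYcard
  refine ⟨H, hHY.trans hYX, hHcard, ?_⟩
  intro a s hs1 hs2
  have hsn : s < n := by omega
  rw [← ZMod.natCast_eq_natCast_iff]
  set A := X.powerset.filter (fun S => S.card = s ∧ t S = a) with hA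
  set B := (X \ H).powerset.filter (fun S => S.card = s ∧ t S = a) with hB
  -- N_J as element of ZMod e
  set NJ : Finset α → ZMod e := fun J => ((A.filter fun S => J ⊆ S).card : ZMod e) with hNJ
  -- relate NJ to the Ramsey coloring
  have hNc : ∀ J : Finset α, NJ J = c J a ⟨s, hsn⟩ := by
    intro J
    simp only [hNJ, hc]
    congr 1
    conv_lhs => rw [hA]
    rw [Finset.filter_filter]
    congr 1
    apply Finset.filter_congr
    intro S _
    tauto
  -- B as a filter of A
  have hBA : B = A.filter (fun S => S ∩ H = ∅) := by
    ext S
    simp only [hB, hA, Finset.mem_filter, Finset.mem_powerset, Finset.subset_sdiff,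
      ← Finset.disjoint_iff_inter_eq_empty, disjoint_comm]
    tauto
  -- inclusion-exclusion
  have step2 : (B.card : ZMod e) = ∑ J ∈ H.powerset, (-1 : ZMod e) ^ J.card * NJ J := by
    have hlhs : (B.card : ZMod e) = ∑ S ∈ A, (if S ∩ H = ∅ then (1 : ZMod e) else 0) := by
      rw [hBA]; exact Finset.natCast_card_filter _ _
    have hrhs : ∀ J : Finset α, NJ J = ∑ S ∈ A, (if J ⊆ S then (1 : ZMod e) else 0) := by
      intro J; exact Finset.natCast_card_filter _ _
    rw [hlhs]
    simp_rw [hrhs, Finset.mul_sum]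
    rw [Finset.sum_comm]
    refine Finset.sum_congr rfl ?_
    intro S _
    symm
    have hps : H.powerset.filter (· ⊆ S) = (S ∩ H).powerset := by
      ext J
      simp only [Finset.mem_filter, Finset.mem_powerset, Finset.subset_inter_iff]
      tauto
    calc ∑ J ∈ H.powerset, (-1 : ZMod e) ^ J.card * (if J ⊆ S then (1 : ZMod e) else 0)
        = ∑ J ∈ H.powerset, (if J ⊆ S then (-1 : ZMod e) ^ J.card else 0) := by
          refine Finset.sum_congr rfl fun J _ => ?_
          rw [mul_ite, mul_one, mul_zero]
      _ = ∑ J ∈ H.powerset.filter (· ⊆ S), (-1 : ZMod e) ^ J.card := by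
          rw [Finset.sum_filter]
      _ = ∑ J ∈ (S ∩ H).powerset, (-1 : ZMod e) ^ J.card := by rw [hps]
      _ = if S ∩ H = ∅ then 1 else 0 := by
          have h := Finset.sum_powerset_neg_one_pow_card (x := S ∩ H)
          have h2 := congrArg (fun z : ℤ => (z : ZMod e)) h
          push_cast at h2
          rw [h2]
  -- split by cardinality
  rw [Finset.sum_powerset] at step2
  have hzero : ∀ j ∈ Finset.range (H.card + 1), j ≠ 0 →
      (∑ J ∈ Finset.powersetCard j H, (-1 : ZMod e) ^ J.card * NJ J) = 0 := by
    intro j _ hj0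
    rcases le_or_gt j s with hjs | hjs
    · -- homogeneous case
      obtain ⟨γ, hγ⟩ := hhom j (by omega) (by omega)
      have hconst : ∀ J ∈ Finset.powersetCard j H,
          (-1 : ZMod e) ^ J.card * NJ J = (-1 : ZMod e) ^ j * γ a ⟨s, hsn⟩ := by
        intro J hJ
        obtain ⟨hJH, hJcard⟩ := Finset.mem_powersetCard.mp hJ
        rw [hJcard, hNc J, hγ J (hJH.trans hHY) hJcard]
      rw [Finset.sum_congr rfl hconst, Finset.sum_const, Finset.card_powersetCard, hHcard]
      have : ((Nat.choose (e * Nat.factorial (n - 1)) j : ℕ) : ZMod e) = 0 :=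
        (ZMod.natCast_eq_zero_iff _ _).mpr (choose_dvd_aux e n j he (by omega) (by omega))
      rw [nsmul_eq_mul, this, zero_mul]
    · -- j > s : each NJ J = 0
      refine Finset.sum_eq_zero fun J hJ => ?_
      obtain ⟨hJH, hJcard⟩ := Finset.mem_powersetCard.mp hJ
      have : A.filter (fun S => J ⊆ S) = ∅ := by
        refine Finset.filter_eq_empty_iff.mpr fun S hS => ?_
        have hScard : S.card = s := (Finset.mem_filter.mp hS).2.1
        intro hJS
        have := Finset.card_le_card hJS
        omega
      rw [hNJ]
      simp only [this, Finset.card_empty, Nat.cast_zero, mul_zero]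
  rw [Finset.sum_eq_single_of_mem 0 (Finset.mem_range.mpr (by omega)) hzero] at step2
  have h0 : (∑ J ∈ Finset.powersetCard 0 H, (-1 : ZMod e) ^ J.card * NJ J) = (A.card : ZMod e) := by
    rw [Finset.powersetCard_zero, Finset.sum_singleton]
    simp only [Finset.card_empty, pow_zero, one_mul, hNJ]
    congr 1
    rw [Finset.filter_true_of_mem fun S _ => Finset.empty_subset S]
  rw [h0] at step2
  exact step2.symm
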